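/- In the Boudol–Castellani type system ::₃, the WHILE rule (premises: tst :: l', c ::₃ (l, l'), l' ≤ l; conclusion: (While tst c) ::₃ (l, l')) and the WHILE' rule (premises: tst :: l₀, c ::₃ (l, l'), l₀ ⊔ l' ≤ l; conclusion: (While tst c) ::₃ (l, l₀ ⊔ l')) are interderivable in the presence of the subtyping rule: the system with WHILE derives exactly the same judgments as the system with WHILE'. -/
import Mathlib


/-- Commands of a while language with parallel composition, over variables
and expressions (tests are modeled as expressions). -/
inductive Com (Var Exp : Type) : Type where
  | assign : Var → Exp → Com Var Exp
  | seq    : Com Var Exp → Com Var Exp → Com Var Exp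
  | ite    : Exp → Com Var Exp → Com Var Exp → Com Var Exp
  | while  : Exp → Com Var Exp → Com Var Exp
  | par    : Com Var Exp → Com Var Exp → Com Var Exp

/- Security levels: the two-point lattice L = {lo, hi} is modeled as Bool,
with lo = false, hi = true, so false < true. -/

variable {Var Exp : Type}

/-- minimal type of an expression/test: sup of the levels of its variables. -/
noncomputable def minTp (sec : Var → Bool) (Vars : Exp → Finset Var) (e : Exp) : Bool :=
  (Vars e).sup sec

/-- typing of expressions/tests: `e :: lo` iff all variables of `e` are low; `e :: hi` always. -/
def ETp (sec : Var → Bool) (Vars : Exp → Finset Var) (e : Exp) (l : Bool) : Prop :=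
  l = true ∨ ∀ x ∈ Vars e, sec x = false

/-- maximal write type, Boudol-Castellani. -/
def maxWtp (sec : Var → Bool) : Com Var Exp → Bool
  | .assign x _ => sec x
  | .seq c1 c2  => maxWtp sec c1 ⊓ maxWtp sec c2
  | .ite _ c1 c2 => maxWtp sec c1 ⊓ maxWtp sec c2
  | .while _ c  => maxWtp sec c
  | .par c1 c2  => maxWtp sec c1 ⊓ maxWtp sec c2

/-- minimal read type, Boudol-Castellani. -/
noncomputable def minRtp (sec : Var → Bool) (Vars : Exp → Finset Var) : Com Var Exp → Bool
  | .assign _ _ => false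
  | .seq c1 c2  => minRtp sec Vars c1 ⊔ minRtp sec Vars c2
  | .ite t c1 c2 => minTp sec Vars t ⊔ minRtp sec Vars c1 ⊔ minRtp sec Vars c2
  | .while t c  => minTp sec Vars t ⊔ minRtp sec Vars c
  | .par c1 c2  => minRtp sec Vars c1 ⊔ minRtp sec Vars c2

/-- Boudol-Castellani safety predicate. -/
noncomputable def safe3 (sec : Var → Bool) (Vars : Exp → Finset Var) : Com Var Exp → Prop
  | .assign x e => minTp sec Vars e ≤ sec x
  | .seq c1 c2  => safe3 sec Vars c1 ∧ safe3 sec Vars c2 ∧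
      minRtp sec Vars c1 ≤ maxWtp sec c2
  | .ite t c1 c2 => safe3 sec Vars c1 ∧ safe3 sec Vars c2 ∧
      minTp sec Vars t ≤ maxWtp sec c1 ⊓ maxWtp sec c2
  | .while t c  => safe3 sec Vars c ∧
      (minTp sec Vars t ⊔ minRtp sec Vars c) ≤ maxWtp sec c
  | .par c1 c2  => safe3 sec Vars c1 ∧ safe3 sec Vars c2

/-- The Boudol-Castellani type system `::₃`. -/
inductive Tp3 (sec : Var → Bool) (Vars : Exp → Finset Var) :
    Com Var Exp → Bool → Bool → Prop where
  | assign {x e l l'} : sec x = l → ETp sec Vars e l → Tp3 sec Vars (.assign x e) l l'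
  | compose {c1 c2 l1 l1' l2 l2'} : Tp3 sec Vars c1 l1 l1' → Tp3 sec Vars c2 l2 l2' →
      l1' ≤ l2 → Tp3 sec Vars (.seq c1 c2) (l1 ⊓ l2) (l1' ⊔ l2')
  | if_ {t c1 c2 l0 l l'} : ETp sec Vars t l0 → Tp3 sec Vars c1 l l' →
      Tp3 sec Vars c2 l l' → l0 ≤ l → Tp3 sec Vars (.ite t c1 c2) l (l0 ⊔ l')
  | while_ {t c l l'} : ETp sec Vars t l' → Tp3 sec Vars c l l' → l' ≤ l →
      Tp3 sec Vars (.while t c) l l'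
  | par {c1 c2 l l'} : Tp3 sec Vars c1 l l' → Tp3 sec Vars c2 l l' →
      Tp3 sec Vars (.par c1 c2) l l'
  | subtype {c l1 l1' l2 l2'} : Tp3 sec Vars c l1 l1' → l2 ≤ l1 → l1' ≤ l2' →
      Tp3 sec Vars c l2 l2'

/-- The Boudol-Castellani type system with the (WHILE') rule instead of (WHILE). -/
inductive Tp3' (sec : Var → Bool) (Vars : Exp → Finset Var) :
    Com Var Exp → Bool → Bool → Prop where
  | assign {x e l l'} : sec x = l → ETp sec Vars e l → Tp3' sec Vars (.assign x e) l l'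
  | compose {c1 c2 l1 l1' l2 l2'} : Tp3' sec Vars c1 l1 l1' → Tp3' sec Vars c2 l2 l2' →
      l1' ≤ l2 → Tp3' sec Vars (.seq c1 c2) (l1 ⊓ l2) (l1' ⊔ l2')
  | if_ {t c1 c2 l0 l l'} : ETp sec Vars t l0 → Tp3' sec Vars c1 l l' →
      Tp3' sec Vars c2 l l' → l0 ≤ l → Tp3' sec Vars (.ite t c1 c2) l (l0 ⊔ l')
  | while' {t c l0 l l'} : ETp sec Vars t l0 → Tp3' sec Vars c l l' → l0 ⊔ l' ≤ l →
      Tp3' sec Vars (.while t c) l (l0 ⊔ l')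
  | par {c1 c2 l l'} : Tp3' sec Vars c1 l l' → Tp3' sec Vars c2 l l' →
      Tp3' sec Vars (.par c1 c2) l l'
  | subtype {c l1 l1' l2 l2'} : Tp3' sec Vars c l1 l1' → l2 ≤ l1 → l1' ≤ l2' →
      Tp3' sec Vars c l2 l2'

theorem tp3_while_while'_interderivable (sec : Var → Bool) (Vars : Exp → Finset Var)
    (c : Com Var Exp) (l l' : Bool) :
    Tp3 sec Vars c l l' ↔ Tp3' sec Vars c l l' := by
  constructor
  · intro h
    induction h with
    | assign h1 h2 => exact Tp3'.assign h1 h2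
    | compose _ _ h ih1 ih2 => exact Tp3'.compose ih1 ih2 h
    | if_ h1 _ _ h4 ih1 ih2 => exact Tp3'.if_ h1 ih1 ih2 h4
    | while_ h1 _ h3 ih =>
        have := Tp3'.while' h1 ih (by simp [h3])
        simpa using this
    | par _ _ ih1 ih2 => exact Tp3'.par ih1 ih2
    | subtype _ h2 h3 ih => exact Tp3'.subtype ih h2 h3
  · intro h
    induction h with
    | assign h1 h2 => exact Tp3.assign h1 h2
    | compose _ _ h ih1 ih2 => exact Tp3.compose ih1 ih2 h
    | if_ h1 _ _ h4 ih1 ih2 => exact Tp3.if_ h1 ih1 ih2 h4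
    | while' h1 _ h3 ih =>
        refine Tp3.while_ ?_ (Tp3.subtype ih le_rfl le_sup_right) h3
        rcases h1 with h | h
        · exact Or.inl (by simp [h])
        · cases hl' : (_ ⊔ _ : Bool) with
          | false => exact Or.inr h
          | true => exact Or.inl rfl
    | par _ _ ih1 ih2 => exact Tp3.par ih1 ih2
    | subtype _ h2 h3 ih => exact Tp3.subtype ih h2 h3
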